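/- (Multi-skill covariance of residual changes.) In the multi-skill setting under Assumption 5 with parameter k, for all integers t, t' with t − t' ≥ k + 1, cov(w_t − w_{t−1}, w_{t'}) = Σ_{j=1}^{J} Σ_{j'=1}^{J} (μ_{j,t} − μ_{j,t−1}) · μ_{j',t'} · cov(θ_{j,t'}, θ_{j',t'}). -/

import Mathlib

open MeasureTheory ProbabilityTheory

/-- Covariance of two real-valued random variables under measure `P`. -/
noncomputable def cov {Ω : Type*} [MeasurableSpace Ω] (P : Measure Ω) (X Y : Ω → ℝ) : ℝ :=
  ∫ ω, (X ω - ∫ a, X a ∂P) * (Y ω - ∫ a, Y a ∂P) ∂P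

/-- Variance of a real-valued random variable under measure `P`. -/
noncomputable def Var {Ω : Type*} [MeasurableSpace Ω] (P : Measure Ω) (X : Ω → ℝ) : ℝ :=
  cov P X X

section CovAux

variable {Ω : Type*} [MeasurableSpace Ω] {P : Measure Ω} [IsProbabilityMeasure P]

lemma memL2_integrable_mul {X Y : Ω → ℝ} (hX : MemLp X 2 P) (hY : MemLp Y 2 P) :
    Integrable (fun ω => X ω * Y ω) P := by
  have h : MemLp (X • Y) 1 P :=
    haveI : ENNReal.HolderTriple 2 2 1 := ⟨by rw [inv_one]; exact ENNReal.inv_two_add_inv_two⟩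
    MemLp.smul (p := 2) (q := 2) (r := 1) hY hX
  exact memLp_one_iff_integrable.mp h

lemma memL2_centered {X : Ω → ℝ} (hX : MemLp X 2 P) :
    MemLp (fun ω => X ω - ∫ a, X a ∂P) 2 P :=
  hX.sub (memLp_const _)

lemma cov_comm (X Y : Ω → ℝ) : cov P X Y = cov P Y X := by
  unfold cov; congr 1; funext ω; ring

lemma cov_zero_left (Z : Ω → ℝ) : cov P (fun _ => (0 : ℝ)) Z = 0 := by
  simp [cov]

lemma cov_add_left {X Y Z : Ω → ℝ} (hX : MemLp X 2 P) (hY : MemLp Y 2 P)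
    (hZ : MemLp Z 2 P) :
    cov P (fun ω => X ω + Y ω) Z = cov P X Z + cov P Y Z := by
  have h1 : Integrable (fun ω => (X ω - ∫ a, X a ∂P) * (Z ω - ∫ a, Z a ∂P)) P :=
    memL2_integrable_mul (memL2_centered hX) (memL2_centered hZ)
  have h2 : Integrable (fun ω => (Y ω - ∫ a, Y a ∂P) * (Z ω - ∫ a, Z a ∂P)) P :=
    memL2_integrable_mul (memL2_centered hY) (memL2_centered hZ)
  simp only [cov]
  rw [integral_add (hX.integrable one_le_two) (hY.integrable one_le_two),
    ← integral_add h1 h2]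
  congr 1; funext ω; ring

lemma cov_sub_left {X Y Z : Ω → ℝ} (hX : MemLp X 2 P) (hY : MemLp Y 2 P)
    (hZ : MemLp Z 2 P) :
    cov P (fun ω => X ω - Y ω) Z = cov P X Z - cov P Y Z := by
  have h1 : Integrable (fun ω => (X ω - ∫ a, X a ∂P) * (Z ω - ∫ a, Z a ∂P)) P :=
    memL2_integrable_mul (memL2_centered hX) (memL2_centered hZ)
  have h2 : Integrable (fun ω => (Y ω - ∫ a, Y a ∂P) * (Z ω - ∫ a, Z a ∂P)) P :=
    memL2_integrable_mul (memL2_centered hY) (memL2_centered hZ)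
  simp only [cov]
  rw [integral_sub (hX.integrable one_le_two) (hY.integrable one_le_two),
    ← integral_sub h1 h2]
  congr 1; funext ω; ring

lemma cov_const_mul_left (c : ℝ) (X Z : Ω → ℝ) :
    cov P (fun ω => c * X ω) Z = c * cov P X Z := by
  have hint : ∫ a, c * X a ∂P = c * ∫ a, X a ∂P := integral_const_mul c X
  simp only [cov, hint]
  conv_rhs => rw [← integral_const_mul]
  congr 1; funext ω; ring

lemma cov_sum_left {ι : Type*} (s : Finset ι) (f : ι → Ω → ℝ) (Z : Ω → ℝ)
    (hf : ∀ i, MemLp (f i) 2 P) (hZ : MemLp Z 2 P) :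
    cov P (fun ω => ∑ i ∈ s, f i ω) Z = ∑ i ∈ s, cov P (f i) Z := by
  classical
  induction s using Finset.induction_on with
  | empty => simpa using cov_zero_left (P := P) Z
  | @insert a s hnot ih =>
      simp only [Finset.sum_insert hnot]
      rw [cov_add_left (hf a) (memLp_finset_sum s (fun i _ => hf i)) hZ, ih]

lemma cov_add_right {X Y Z : Ω → ℝ} (hX : MemLp X 2 P) (hY : MemLp Y 2 P)
    (hZ : MemLp Z 2 P) :
    cov P Z (fun ω => X ω + Y ω) = cov P Z X + cov P Z Y := by
  rw [cov_comm, cov_add_left hX hY hZ, cov_comm X Z, cov_comm Y Z]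

lemma cov_sub_right {X Y Z : Ω → ℝ} (hX : MemLp X 2 P) (hY : MemLp Y 2 P)
    (hZ : MemLp Z 2 P) :
    cov P Z (fun ω => X ω - Y ω) = cov P Z X - cov P Z Y := by
  rw [cov_comm, cov_sub_left hX hY hZ, cov_comm X Z, cov_comm Y Z]

lemma cov_const_mul_right (c : ℝ) (X Z : Ω → ℝ) :
    cov P Z (fun ω => c * X ω) = c * cov P Z X := by
  rw [cov_comm, cov_const_mul_left, cov_comm X Z]

lemma cov_sum_right {ι : Type*} (s : Finset ι) (f : ι → Ω → ℝ) (Z : Ω → ℝ)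
    (hf : ∀ i, MemLp (f i) 2 P) (hZ : MemLp Z 2 P) :
    cov P Z (fun ω => ∑ i ∈ s, f i ω) = ∑ i ∈ s, cov P Z (f i) := by
  rw [cov_comm, cov_sum_left s f Z hf hZ]
  exact Finset.sum_congr rfl fun i _ => cov_comm _ _

end CovAux

/-- Multi-skill covariance of residual changes: under Assumption 5, for `t - t' ≥ k + 1`,
`cov (w t − w (t−1)) (w t') = Σⱼ Σⱼ' (μ j t − μ j (t−1)) * μ j' t' * cov (θ j t') (θ j' t')`. -/
theorem multi_skill_cov_of_changes
    {Ω : Type*} [MeasurableSpace Ω] (P : Measure Ω) [IsProbabilityMeasure P]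
    (J : ℕ) (hJ : 1 ≤ J)
    (θ : Fin J → ℤ → Ω → ℝ) (μ : Fin J → ℤ → ℝ) (ε : ℤ → Ω → ℝ) (w : ℤ → Ω → ℝ)
    (hθ : ∀ j t, MemLp (θ j t) 2 P) (hε : ∀ t, MemLp (ε t) 2 P)
    (hw : ∀ t ω, w t ω = (∑ j : Fin J, μ j t * θ j t ω) + ε t ω)
    (k : ℕ) (hk : 1 ≤ k)
    (A5i : ∀ (j j' : Fin J) (t t' : ℤ), 1 ≤ t - t' →
      cov P (fun ω => θ j t ω - θ j (t - 1) ω) (θ j' t') = 0)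
    (A5ii : ∀ (j : Fin J) (t t' : ℤ), cov P (θ j t) (ε t') = 0)
    (A5iii : ∀ t t' : ℤ, (k : ℤ) ≤ |t - t'| → cov P (ε t) (ε t') = 0) :
    ∀ t t' : ℤ, (k : ℤ) + 1 ≤ t - t' →
      cov P (fun ω => w t ω - w (t - 1) ω) (w t') =
        ∑ j : Fin J, ∑ j' : Fin J,
          (μ j t - μ j (t - 1)) * μ j' t' * cov P (θ j t') (θ j' t') := by
  intro t t' htt'
  have hk1 : (1 : ℤ) ≤ k := by exact_mod_cast hk
  -- telescoping consequence of A5i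
  have tele : ∀ (j j' : Fin J) (s : ℤ), t' ≤ s →
      cov P (fun ω => θ j s ω - θ j t' ω) (θ j' t') = 0 := by
    intro j j'
    refine Int.le_induction ?_ ?_
    · have e : (fun ω => θ j t' ω - θ j t' ω) = fun _ => (0 : ℝ) := by
        funext ω; ring
      rw [e]; exact cov_zero_left _
    · intro n hn ih
      have hA1 : MemLp (fun ω => θ j (n + 1) ω - θ j n ω) 2 P :=
        (hθ j (n + 1)).sub (hθ j n)
      have hA2 : MemLp (fun ω => θ j n ω - θ j t' ω) 2 P :=
        (hθ j n).sub (hθ j t')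
      have hsplit : cov P (fun ω => θ j (n + 1) ω - θ j t' ω) (θ j' t')
          = cov P (fun ω => θ j (n + 1) ω - θ j n ω) (θ j' t')
            + cov P (fun ω => θ j n ω - θ j t' ω) (θ j' t') := by
        rw [← cov_add_left hA1 hA2 (hθ j' t')]
        congr 1; funext ω; ring
      have h1 := A5i j j' (n + 1) t' (by omega)
      have e1 : n + 1 - 1 = n := by ring
      rw [e1] at h1
      rw [hsplit, h1, ih, add_zero]
  -- w as an explicit function
  have hwfun : ∀ s : ℤ, w s = fun ω => (∑ j : Fin J, μ j s * θ j s ω) + ε s ω :=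
    fun s => funext fun ω => hw s ω
  -- MemLp facts
  have hμθ : ∀ (j : Fin J) (s : ℤ), MemLp (fun ω => μ j s * θ j s ω) 2 P :=
    fun j s => (hθ j s).const_mul _
  have hS : ∀ s : ℤ, MemLp (fun ω => ∑ j : Fin J, μ j s * θ j s ω) 2 P :=
    fun s => memLp_finset_sum _ (fun j _ => hμθ j s)
  have hwL2 : ∀ s : ℤ, MemLp (w s) 2 P := by
    intro s; rw [hwfun s]; exact (hS s).add (hε s)
  set f : Fin J → Ω → ℝ :=
    fun j ω => μ j t * θ j t ω - μ j (t - 1) * θ j (t - 1) ω with hf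
  have hfL2 : ∀ j, MemLp (f j) 2 P := fun j => (hμθ j t).sub (hμθ j (t - 1))
  have hA : MemLp (fun ω => ∑ j : Fin J, f j ω) 2 P :=
    memLp_finset_sum _ (fun j _ => hfL2 j)
  have hB : MemLp (fun ω => ε t ω - ε (t - 1) ω) 2 P := (hε t).sub (hε (t - 1))
  -- decomposition of the wage change
  have hΔ : (fun ω => w t ω - w (t - 1) ω)
      = fun ω => (∑ j : Fin J, f j ω) + (ε t ω - ε (t - 1) ω) := by
    funext ω
    simp only [hf]
    rw [hw t ω, hw (t - 1) ω, Finset.sum_sub_distrib]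
    ring
  -- covariance of the noise part with w t'
  have hcovB : cov P (fun ω => ε t ω - ε (t - 1) ω) (w t') = 0 := by
    rw [hwfun t', cov_add_right (hS t') (hε t') hB,
      cov_sum_right Finset.univ _ _ (fun j => hμθ j t') hB]
    have hterm : ∀ j' : Fin J,
        cov P (fun ω => ε t ω - ε (t - 1) ω) (fun ω => μ j' t' * θ j' t' ω) = 0 := by
      intro j'
      rw [cov_const_mul_right, cov_sub_left (hε t) (hε (t - 1)) (hθ j' t'),
        cov_comm (ε t) (θ j' t'), cov_comm (ε (t - 1)) (θ j' t'),
        A5ii j' t' t, A5ii j' t' (t - 1)]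
      ring
    have hε' : cov P (fun ω => ε t ω - ε (t - 1) ω) (ε t') = 0 := by
      rw [cov_sub_left (hε t) (hε (t - 1)) (hε t'),
        A5iii t t' (by rw [abs_of_nonneg (by omega : (0:ℤ) ≤ t - t')]; omega),
        A5iii (t - 1) t' (by rw [abs_of_nonneg (by omega : (0:ℤ) ≤ t - 1 - t')]; omega)]
      ring
    rw [Finset.sum_congr rfl (fun j' _ => hterm j'), hε']
    simp
  -- key term: covariance of f j with θ j' t'
  have key : ∀ j j' : Fin J, cov P (f j) (θ j' t')
      = (μ j t - μ j (t - 1)) * cov P (θ j t') (θ j' t') := by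
    intro j j'
    have e : f j = fun ω =>
        (μ j t * (θ j t ω - θ j t' ω) + (-(μ j (t - 1)) * (θ j (t - 1) ω - θ j t' ω)))
          + (μ j t - μ j (t - 1)) * θ j t' ω := by
      funext ω; rw [hf]; ring
    have hX1 : MemLp (fun ω => μ j t * (θ j t ω - θ j t' ω)) 2 P :=
      ((hθ j t).sub (hθ j t')).const_mul _
    have hX2 : MemLp (fun ω => -(μ j (t - 1)) * (θ j (t - 1) ω - θ j t' ω)) 2 P :=
      ((hθ j (t - 1)).sub (hθ j t')).const_mul _
    have hX12 : MemLp (fun ω => μ j t * (θ j t ω - θ j t' ω)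
        + -μ j (t - 1) * (θ j (t - 1) ω - θ j t' ω)) 2 P := hX1.add hX2
    have hX3 : MemLp (fun ω => (μ j t - μ j (t - 1)) * θ j t' ω) 2 P :=
      (hθ j t').const_mul _
    rw [e, cov_add_left hX12 hX3 (hθ j' t'),
      cov_add_left hX1 hX2 (hθ j' t'),
      cov_const_mul_left, cov_const_mul_left, cov_const_mul_left,
      tele j j' t (by omega), tele j j' (t - 1) (by omega)]
    ring
  -- covariance of f j with w t'
  have hcovf : ∀ j : Fin J, cov P (f j) (w t')
      = ∑ j' : Fin J, (μ j t - μ j (t - 1)) * μ j' t' * cov P (θ j t') (θ j' t') := by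
    intro j
    rw [hwfun t', cov_add_right (hS t') (hε t') (hfL2 j),
      cov_sum_right Finset.univ _ _ (fun j' => hμθ j' t') (hfL2 j)]
    have hεterm : cov P (f j) (ε t') = 0 := by
      rw [hf, cov_sub_left (hμθ j t) (hμθ j (t - 1)) (hε t'),
        cov_const_mul_left, cov_const_mul_left, A5ii j t t', A5ii j (t - 1) t']
      ring
    rw [hεterm, add_zero]
    refine Finset.sum_congr rfl fun j' _ => ?_
    rw [cov_const_mul_right, key j j']
    ring
  rw [hΔ, cov_add_left hA hB (hwL2 t'), hcovB, add_zero,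
    cov_sum_left Finset.univ f (w t') hfL2 (hwL2 t')]
  exact Finset.sum_congr rfl fun j _ => hcovf j
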